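/- Under the hypotheses of Theorem 3.2 (range condition and step-size condition of Algorithm 3.1), let (x̄, p̄, q̄, ȳ) be the primal-dual solution to which the sequences generated by Algorithm 3.1 converge weakly. If in addition C is uniformly monotone at x̄, i.e. there exists an increasing function φ : [0,+∞) → [0,+∞] vanishing only at 0 such that ⟨x − x̄, Cx − Cx̄⟩ ≥ φ(‖x − x̄‖) for all x ∈ H, then x_n → x̄ strongly in H as n → +∞. -/

import Mathlib

set_option linter.unusedSectionVars false
open scoped RealInnerProductSpace ENNReal
open Filter Topology

noncomputable section

def MonoOp {E : Type*} [NormedAddCommGroup E] [InnerProductSpace ℝ E] (A : E → Set E) : Prop :=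
  ∀ ⦃x y u v : E⦄, u ∈ A x → v ∈ A y → (0:ℝ) ≤ ⟪x - y, u - v⟫

def MaxMonoOp {E : Type*} [NormedAddCommGroup E] [InnerProductSpace ℝ E] (A : E → Set E) : Prop :=
  MonoOp A ∧ ∀ B : E → Set E, MonoOp B → (∀ x, A x ⊆ B x) → B = A

def invOp {E : Type*} (A : E → Set E) : E → Set E := fun u => {x | u ∈ A x}

def sumOp {E : Type*} [Add E] (A B : E → Set E) : E → Set E :=
  fun x => {s | ∃ u ∈ A x, ∃ v ∈ B x, s = u + v}

/-- parallel sum `A □ B = (A⁻¹ + B⁻¹)⁻¹` -/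
def parOp {E : Type*} [Add E] (A B : E → Set E) : E → Set E :=
  invOp (sumOp (invOp A) (invOp B))

/-- `T* ∘ B ∘ T` -/
def compOp {F G : Type*} [NormedAddCommGroup F] [InnerProductSpace ℝ F] [CompleteSpace F]
    [NormedAddCommGroup G] [InnerProductSpace ℝ G] [CompleteSpace G]
    (T : F →L[ℝ] G) (B : G → Set G) : F → Set F :=
  fun x => (ContinuousLinearMap.adjoint T) '' (B (T x))

def smulOp {E : Type*} [SMul ℝ E] (γ : ℝ) (A : E → Set E) : E → Set E :=
  fun x => (γ • ·) '' A x

/-- `x = J_{γ A}(w)`, i.e. `w ∈ x + γ A x`. -/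
def IsRes {E : Type*} [AddCommGroup E] [Module ℝ E] (γ : ℝ) (A : E → Set E) (w x : E) : Prop :=
  w - x ∈ smulOp γ A x

/-- weak convergence in a Hilbert space -/
def WConv {E : Type*} [NormedAddCommGroup E] [InnerProductSpace ℝ E] (u : ℕ → E) (l : E) : Prop :=
  ∀ w : E, Tendsto (fun n => ⟪u n, w⟫) atTop (𝓝 ⟪l, w⟫)



lemma sum_norm_add {E : Type*} [NormedAddCommGroup E] {f g : ℕ → E}
    (hf : Summable fun n => ‖f n‖) (hg : Summable fun n => ‖g n‖) :
    Summable fun n => ‖f n + g n‖ :=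
  Summable.of_nonneg_of_le (fun _ => norm_nonneg _) (fun _ => norm_add_le _ _) (hf.add hg)

lemma sum_norm_sub {E : Type*} [NormedAddCommGroup E] {f g : ℕ → E}
    (hf : Summable fun n => ‖f n‖) (hg : Summable fun n => ‖g n‖) :
    Summable fun n => ‖f n - g n‖ :=
  Summable.of_nonneg_of_le (fun _ => norm_nonneg _) (fun _ => norm_sub_le _ _) (hf.add hg)

lemma sum_norm_smul {E : Type*} [NormedAddCommGroup E] [NormedSpace ℝ E] (c : ℝ) {f : ℕ → E}
    (hf : Summable fun n => ‖f n‖) : Summable fun n => ‖c • f n‖ :=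
  Summable.of_nonneg_of_le (fun _ => norm_nonneg _)
    (fun n => by rw [norm_smul]) (hf.mul_left ‖c‖)

lemma sum_norm_clm {E F : Type*} [NormedAddCommGroup E] [NormedAddCommGroup F]
    [NormedSpace ℝ E] [NormedSpace ℝ F] (T : E →L[ℝ] F) {f : ℕ → E}
    (hf : Summable fun n => ‖f n‖) : Summable fun n => ‖T (f n)‖ :=
  Summable.of_nonneg_of_le (fun _ => norm_nonneg _) (fun n => T.le_opNorm _) (hf.mul_left ‖T‖)

lemma bracket_aux {β μi κ t c : ℝ} (hβ : 0 < β) (hκd : κ = 2*μi - β⁻¹) :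
    κ*c^2 ≤ β*t^2 - 2*(t*c) + 2*μi*c^2 := by
  have hβne := hβ.ne'
  rw [← sub_nonneg, hκd]
  have expand : β*t^2 - 2*(t*c) + 2*μi*c^2 - (2*μi - β⁻¹)*c^2
      = β*t^2 - 2*(t*c) + β⁻¹*c^2 := by ring
  rw [expand]
  have e : (β*t^2 - 2*(t*c) + β⁻¹*c^2) * β = (β*t - c)^2 := by field_simp; ring
  have h2 : 0 ≤ (β*t^2 - 2*(t*c) + β⁻¹*c^2) * β := by rw [e]; exact sq_nonneg _
  have h3 : 0 * β ≤ (β*t^2 - 2*(t*c) + β⁻¹*c^2) * β := by linarith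
  exact le_of_mul_le_mul_right h3 hβ

lemma monoOp_inv {E : Type*} [NormedAddCommGroup E] [InnerProductSpace ℝ E]
    {A : E → Set E} (h : MonoOp A) : MonoOp (invOp A) := by
  intro x y u v hu hv
  have h2 := h hu hv
  rw [real_inner_comm]
  exact h2

lemma isRes_mem {E : Type*} [AddCommGroup E] [Module ℝ E] {γ : ℝ} (hγ : γ ≠ 0)
    {A : E → Set E} {w x : E} (h : IsRes γ A w x) : γ⁻¹ • (w - x) ∈ A x := by
  obtain ⟨s, hs, heq⟩ := h
  have e : γ⁻¹ • (w - x) = s := by rw [← heq, inv_smul_smul₀ hγ]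
  rw [e]
  exact hs

section Aux

variable {m : ℕ}
    {H : Type*} [NormedAddCommGroup H] [InnerProductSpace ℝ H]
    {G : Fin m → Type*} [∀ i, NormedAddCommGroup (G i)] [∀ i, InnerProductSpace ℝ (G i)]
    {X : Fin m → Type*} [∀ i, NormedAddCommGroup (X i)] [∀ i, InnerProductSpace ℝ (X i)]
    {Y : Fin m → Type*} [∀ i, NormedAddCommGroup (Y i)] [∀ i, InnerProductSpace ℝ (Y i)]

variable (θ1 θ2 γ1 γ2 σ : Fin m → ℝ)
  (L : ∀ i, H →L[ℝ] G i) (K : ∀ i, G i →L[ℝ] X i) (M : ∀ i, G i →L[ℝ] Y i)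

/-- the product space -/
abbrev PS (H : Type*) (G X Y : Fin m → Type*) :=
  H × (∀ i, X i) × (∀ i, Y i) × (∀ i, G i) × (∀ i, G i) × (∀ i, G i)

/-- per-index block of the bilinear form -/
def blk (i : Fin m) (a b : PS H G X Y) : ℝ :=
  (θ1 i)⁻¹ * ⟪a.2.1 i, b.2.1 i⟫ + (θ2 i)⁻¹ * ⟪a.2.2.1 i, b.2.2.1 i⟫ +
  (γ1 i)⁻¹ * ⟪a.2.2.2.1 i, b.2.2.2.1 i⟫ + (γ2 i)⁻¹ * ⟪a.2.2.2.2.1 i, b.2.2.2.2.1 i⟫ +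
  (σ i)⁻¹ * ⟪a.2.2.2.2.2 i, b.2.2.2.2.2 i⟫ -
  ⟪L i a.1, b.2.2.2.2.2 i⟫ - ⟪L i b.1, a.2.2.2.2.2 i⟫ +
  ⟪K i (a.2.2.2.1 i), b.2.1 i⟫ + ⟪K i (b.2.2.2.1 i), a.2.1 i⟫ +
  ⟪M i (a.2.2.2.2.1 i), b.2.2.1 i⟫ + ⟪M i (b.2.2.2.2.1 i), a.2.2.1 i⟫

variable (τ : ℝ)

/-- the full bilinear form -/
def Bil (a b : PS H G X Y) : ℝ :=
  τ⁻¹ * ⟪a.1, b.1⟫ + ∑ i, blk θ1 θ2 γ1 γ2 σ L K M i a b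

lemma blk_add_left (i : Fin m) (a b c : PS H G X Y) :
    blk θ1 θ2 γ1 γ2 σ L K M i (a + b) c
      = blk θ1 θ2 γ1 γ2 σ L K M i a c + blk θ1 θ2 γ1 γ2 σ L K M i b c := by
  simp only [blk, Prod.fst_add, Prod.snd_add, Pi.add_apply, inner_add_left, inner_add_right,
    map_add]
  ring

lemma blk_sub_left (i : Fin m) (a b c : PS H G X Y) :
    blk θ1 θ2 γ1 γ2 σ L K M i (a - b) c
      = blk θ1 θ2 γ1 γ2 σ L K M i a c - blk θ1 θ2 γ1 γ2 σ L K M i b c := by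
  simp only [blk, Prod.fst_sub, Prod.snd_sub, Pi.sub_apply, inner_sub_left, inner_sub_right,
    map_sub]
  ring

lemma blk_smul_left (i : Fin m) (r : ℝ) (a c : PS H G X Y) :
    blk θ1 θ2 γ1 γ2 σ L K M i (r • a) c = r * blk θ1 θ2 γ1 γ2 σ L K M i a c := by
  simp only [blk, Prod.smul_fst, Prod.smul_snd, Pi.smul_apply, real_inner_smul_left,
    real_inner_smul_right, map_smul]
  ring

lemma blk_symm (i : Fin m) (a b : PS H G X Y) :
    blk θ1 θ2 γ1 γ2 σ L K M i a b = blk θ1 θ2 γ1 γ2 σ L K M i b a := by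
  simp only [blk, real_inner_comm]
  ring

lemma Bil_symm (a b : PS H G X Y) :
    Bil θ1 θ2 γ1 γ2 σ L K M τ a b = Bil θ1 θ2 γ1 γ2 σ L K M τ b a := by
  simp only [Bil, blk_symm, real_inner_comm]

lemma Bil_add_left (a b c : PS H G X Y) :
    Bil θ1 θ2 γ1 γ2 σ L K M τ (a + b) c
      = Bil θ1 θ2 γ1 γ2 σ L K M τ a c + Bil θ1 θ2 γ1 γ2 σ L K M τ b c := by
  simp only [Bil, blk_add_left, Prod.fst_add, inner_add_left, Finset.sum_add_distrib]
  ring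

lemma Bil_sub_left (a b c : PS H G X Y) :
    Bil θ1 θ2 γ1 γ2 σ L K M τ (a - b) c
      = Bil θ1 θ2 γ1 γ2 σ L K M τ a c - Bil θ1 θ2 γ1 γ2 σ L K M τ b c := by
  simp only [Bil, blk_sub_left, Prod.fst_sub, inner_sub_left, Finset.sum_sub_distrib]
  ring

lemma Bil_smul_left (r : ℝ) (a c : PS H G X Y) :
    Bil θ1 θ2 γ1 γ2 σ L K M τ (r • a) c = r * Bil θ1 θ2 γ1 γ2 σ L K M τ a c := by
  simp only [Bil, blk_smul_left, Prod.smul_fst, real_inner_smul_left]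
  rw [← Finset.mul_sum]; ring

lemma Bil_add_right (a b c : PS H G X Y) :
    Bil θ1 θ2 γ1 γ2 σ L K M τ a (b + c)
      = Bil θ1 θ2 γ1 γ2 σ L K M τ a b + Bil θ1 θ2 γ1 γ2 σ L K M τ a c := by
  rw [Bil_symm, Bil_add_left, Bil_symm θ1 θ2 γ1 γ2 σ L K M τ b a,
    Bil_symm θ1 θ2 γ1 γ2 σ L K M τ c a]

lemma Bil_sub_right (a b c : PS H G X Y) :
    Bil θ1 θ2 γ1 γ2 σ L K M τ a (b - c)
      = Bil θ1 θ2 γ1 γ2 σ L K M τ a b - Bil θ1 θ2 γ1 γ2 σ L K M τ a c := by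
  rw [Bil_symm, Bil_sub_left, Bil_symm θ1 θ2 γ1 γ2 σ L K M τ b a,
    Bil_symm θ1 θ2 γ1 γ2 σ L K M τ c a]

lemma Bil_smul_right (r : ℝ) (a c : PS H G X Y) :
    Bil θ1 θ2 γ1 γ2 σ L K M τ a (r • c) = r * Bil θ1 θ2 γ1 γ2 σ L K M τ a c := by
  rw [Bil_symm, Bil_smul_left, Bil_symm θ1 θ2 γ1 γ2 σ L K M τ c a]


/-- weighted diagonal quadratic -/
def Dg (a : PS H G X Y) : ℝ :=
  τ⁻¹ * ‖a.1‖^2 + ∑ i, ((θ1 i)⁻¹ * ‖a.2.1 i‖^2 + (θ2 i)⁻¹ * ‖a.2.2.1 i‖^2 +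
    (γ1 i)⁻¹ * ‖a.2.2.2.1 i‖^2 + (γ2 i)⁻¹ * ‖a.2.2.2.2.1 i‖^2 + (σ i)⁻¹ * ‖a.2.2.2.2.2 i‖^2)

lemma amgm1 {s c x y : ℝ} (hs : 0 < s) : 2*c*x*y ≤ s*x^2 + c^2/s*y^2 := by
  have key : (2*c*x*y) * s ≤ (s*x^2 + c^2/s*y^2) * s := by
    field_simp
    nlinarith [sq_nonneg (s*x - c*y)]
  exact le_of_mul_le_mul_right key hs

lemma amgm2 {s t u v : ℝ} (hs : 0 < s) (ht : 0 < t) : 2*(u*v) ≤ t/s*v^2 + s/t*u^2 := by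
  have key : (2*(u*v)) * (s*t) ≤ (t/s*v^2 + s/t*u^2) * (s*t) := by
    field_simp
    nlinarith [sq_nonneg (t*v - s*u), mul_pos hs ht]
  exact le_of_mul_le_mul_right key (mul_pos hs ht)

section QLow

variable (hθ1 : ∀ i, 0 < θ1 i) (hθ2 : ∀ i, 0 < θ2 i)
  (hγ1 : ∀ i, 0 < γ1 i) (hγ2 : ∀ i, 0 < γ2 i) (hσ : ∀ i, 0 < σ i) (hτ : 0 < τ)
  {α : ℝ} (hα0 : 0 ≤ α)
  (hαL : τ * ∑ i, σ i * ‖L i‖^2 ≤ α^2)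
  (hαK : ∀ i, Real.sqrt (θ1 i * γ1 i * ‖K i‖^2) ≤ α)
  (hαM : ∀ i, Real.sqrt (θ2 i * γ2 i * ‖M i‖^2) ≤ α)
  (hL0 : ∀ i, L i ≠ 0)

include hθ1 hθ2 hγ1 hγ2 hσ hτ in
lemma Dg_nonneg (a : PS H G X Y) : 0 ≤ Dg θ1 θ2 γ1 γ2 σ τ a := by
  unfold Dg
  have h1 : (0:ℝ) ≤ τ⁻¹ * ‖a.1‖^2 := by positivity
  have h2 : ∀ i ∈ Finset.univ, (0:ℝ) ≤ (θ1 i)⁻¹ * ‖a.2.1 i‖^2 + (θ2 i)⁻¹ * ‖a.2.2.1 i‖^2 +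
      (γ1 i)⁻¹ * ‖a.2.2.2.1 i‖^2 + (γ2 i)⁻¹ * ‖a.2.2.2.2.1 i‖^2 +
      (σ i)⁻¹ * ‖a.2.2.2.2.2 i‖^2 := by
    intro i _
    have := hθ1 i; have := hθ2 i; have := hγ1 i; have := hγ2 i; have := hσ i
    positivity
  have := Finset.sum_nonneg h2
  linarith

include hθ1 hθ2 hγ1 hγ2 hσ hτ in
lemma Dg_ge_x (a : PS H G X Y) : τ⁻¹ * ‖a.1‖^2 ≤ Dg θ1 θ2 γ1 γ2 σ τ a := by
  unfold Dg
  have h2 : ∀ i ∈ Finset.univ, (0:ℝ) ≤ (θ1 i)⁻¹ * ‖a.2.1 i‖^2 + (θ2 i)⁻¹ * ‖a.2.2.1 i‖^2 +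
      (γ1 i)⁻¹ * ‖a.2.2.2.1 i‖^2 + (γ2 i)⁻¹ * ‖a.2.2.2.2.1 i‖^2 +
      (σ i)⁻¹ * ‖a.2.2.2.2.2 i‖^2 := by
    intro i _
    have := hθ1 i; have := hθ2 i; have := hγ1 i; have := hγ2 i; have := hσ i
    positivity
  have := Finset.sum_nonneg h2
  linarith

lemma crossbound {α θ γ c u v : ℝ} (hθ : 0 < θ) (hγ : 0 < γ) (hc : 0 ≤ c)
    (hα : Real.sqrt (θ*γ*c^2) ≤ α) : 2*(c*u*v) ≤ α*(θ⁻¹*v^2 + γ⁻¹*u^2) := by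
  set s := Real.sqrt θ with hsdef
  set t := Real.sqrt γ with htdef
  have hs : 0 < s := Real.sqrt_pos.mpr hθ
  have ht : 0 < t := Real.sqrt_pos.mpr hγ
  have hs2 : s^2 = θ := Real.sq_sqrt hθ.le
  have ht2 : t^2 = γ := Real.sq_sqrt hγ.le
  have hst : s*t*c ≤ α := by
    have : Real.sqrt (θ*γ*c^2) = s*t*c := by
      rw [Real.sqrt_mul (by positivity), Real.sqrt_mul hθ.le, Real.sqrt_sq hc]
    linarith [hα, this ▸ hα]
  have h2 := amgm2 (u := u) (v := v) hs ht
  have h3 : c*(2*(u*v)) ≤ c*(t/s*v^2 + s/t*u^2) := mul_le_mul_of_nonneg_left h2 hc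
  have e1 : c*(t/s*v^2 + s/t*u^2) = (s*t*c)*(θ⁻¹*v^2) + (s*t*c)*(γ⁻¹*u^2) := by
    rw [← hs2, ← ht2]
    field_simp
  have e2 : (s*t*c)*(θ⁻¹*v^2) ≤ α*(θ⁻¹*v^2) := by
    apply mul_le_mul_of_nonneg_right hst
    have := hθ; positivity
  have e3 : (s*t*c)*(γ⁻¹*u^2) ≤ α*(γ⁻¹*u^2) := by
    apply mul_le_mul_of_nonneg_right hst
    have := hγ; positivity
  nlinarith [h3, e1, e2, e3]

include hθ1 hθ2 hγ1 hγ2 hσ hτ hα0 hαL hαK hαM hL0 in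
lemma Q_low (a : PS H G X Y) :
    (1 - α) * Dg θ1 θ2 γ1 γ2 σ τ a ≤ Bil θ1 θ2 γ1 γ2 σ L K M τ a a := by
  rcases eq_or_lt_of_le hα0 with hz | hαpos
  · -- α = 0 forces m = 0
    have hem : IsEmpty (Fin m) := by
      constructor
      intro i
      have h1 : (0:ℝ) < σ i * ‖L i‖^2 := by
        have h3 : (0:ℝ) < ‖L i‖ := norm_pos_iff.mpr (hL0 i)
        have := hσ i
        positivity
      have h2 : (0:ℝ) < τ * ∑ j, σ j * ‖L j‖^2 := by
        apply mul_pos hτ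
        apply Finset.sum_pos'
        · intro j _
          have h4 : (0:ℝ) ≤ ‖L j‖ := norm_nonneg _
          have := (hσ j).le
          positivity
        · exact ⟨i, Finset.mem_univ i, h1⟩
      rw [← hz] at hαL
      norm_num at hαL
      linarith
    unfold Bil Dg
    rw [Finset.univ_eq_empty, Finset.sum_empty, Finset.sum_empty, ← hz,
      real_inner_self_eq_norm_sq]
    norm_num
  · -- main case : α > 0
    have per : ∀ i ∈ (Finset.univ : Finset (Fin m)),
        (1-α) * ((θ1 i)⁻¹ * ‖a.2.1 i‖^2 + (θ2 i)⁻¹ * ‖a.2.2.1 i‖^2 +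
          (γ1 i)⁻¹ * ‖a.2.2.2.1 i‖^2 + (γ2 i)⁻¹ * ‖a.2.2.2.2.1 i‖^2 +
          (σ i)⁻¹ * ‖a.2.2.2.2.2 i‖^2)
        - (σ i * ‖L i‖^2) * (‖a.1‖^2/α)
        ≤ blk θ1 θ2 γ1 γ2 σ L K M i a a := by
      intro i _
      have hLpos : (0:ℝ) < ‖L i‖ := norm_pos_iff.mpr (hL0 i)
      have hB1 : 2*⟪L i a.1, a.2.2.2.2.2 i⟫ ≤
          (σ i * ‖L i‖^2) * (‖a.1‖^2/α) + α*(σ i)⁻¹*‖a.2.2.2.2.2 i‖^2 := by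
        have c1 : ⟪L i a.1, a.2.2.2.2.2 i⟫ ≤ ‖L i a.1‖ * ‖a.2.2.2.2.2 i‖ :=
          real_inner_le_norm _ _
        have c2 : ‖L i a.1‖ * ‖a.2.2.2.2.2 i‖ ≤ (‖L i‖ * ‖a.1‖) * ‖a.2.2.2.2.2 i‖ :=
          mul_le_mul_of_nonneg_right ((L i).le_opNorm a.1) (norm_nonneg _)
        have hspos : (0:ℝ) < σ i * ‖L i‖^2 / α := by
          have := hσ i; positivity
        have c3 := amgm1 (c := ‖L i‖) (x := ‖a.1‖) (y := ‖a.2.2.2.2.2 i‖) hspos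
        have c4 : ‖L i‖^2 / (σ i * ‖L i‖^2 / α) = α * (σ i)⁻¹ := by
          rw [div_div_eq_mul_div, mul_comm (σ i) (‖L i‖^2), ← div_div,
            mul_div_cancel_left₀ _ (ne_of_gt (show (0:ℝ) < ‖L i‖^2 by positivity)),
            div_eq_mul_inv]
        rw [c4] at c3
        have c5 : (σ i * ‖L i‖^2 / α) * ‖a.1‖^2 = (σ i * ‖L i‖^2) * (‖a.1‖^2/α) := by
          ring
        nlinarith [c1, c2, c3]
      have hB2 : 2*(‖K i‖*‖a.2.2.2.1 i‖*‖a.2.1 i‖) ≤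
          α*((θ1 i)⁻¹*‖a.2.1 i‖^2 + (γ1 i)⁻¹*‖a.2.2.2.1 i‖^2) := by
        have := crossbound (u := ‖a.2.2.2.1 i‖) (v := ‖a.2.1 i‖)
          (hθ1 i) (hγ1 i) (norm_nonneg (K i)) (hαK i)
        linarith [this]
      have hB3 : 2*(‖M i‖*‖a.2.2.2.2.1 i‖*‖a.2.2.1 i‖) ≤
          α*((θ2 i)⁻¹*‖a.2.2.1 i‖^2 + (γ2 i)⁻¹*‖a.2.2.2.2.1 i‖^2) := by
        have := crossbound (u := ‖a.2.2.2.2.1 i‖) (v := ‖a.2.2.1 i‖)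
          (hθ2 i) (hγ2 i) (norm_nonneg (M i)) (hαM i)
        linarith [this]
      have hK1 : |⟪K i (a.2.2.2.1 i), a.2.1 i⟫| ≤ ‖K i‖*‖a.2.2.2.1 i‖*‖a.2.1 i‖ := by
        refine (abs_real_inner_le_norm _ _).trans ?_
        exact mul_le_mul_of_nonneg_right ((K i).le_opNorm _) (norm_nonneg _)
      have hM1 : |⟪M i (a.2.2.2.2.1 i), a.2.2.1 i⟫| ≤ ‖M i‖*‖a.2.2.2.2.1 i‖*‖a.2.2.1 i‖ := by
        refine (abs_real_inner_le_norm _ _).trans ?_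
        exact mul_le_mul_of_nonneg_right ((M i).le_opNorm _) (norm_nonneg _)
      have hK2 : -(‖K i‖*‖a.2.2.2.1 i‖*‖a.2.1 i‖) ≤ ⟪K i (a.2.2.2.1 i), a.2.1 i⟫ := by
        have := neg_abs_le ⟪K i (a.2.2.2.1 i), a.2.1 i⟫
        linarith [hK1]
      have hM2 : -(‖M i‖*‖a.2.2.2.2.1 i‖*‖a.2.2.1 i‖) ≤ ⟪M i (a.2.2.2.2.1 i), a.2.2.1 i⟫ := by
        have := neg_abs_le ⟪M i (a.2.2.2.2.1 i), a.2.2.1 i⟫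
        linarith [hM1]
      unfold blk
      simp only [real_inner_self_eq_norm_sq]
      linarith [hB1, hB2, hB3, hK2, hM2]
    have hsum := Finset.sum_le_sum per
    rw [Finset.sum_sub_distrib, ← Finset.mul_sum, ← Finset.sum_mul] at hsum
    have hS : (∑ i, σ i * ‖L i‖^2) * (‖a.1‖^2/α) ≤ α * τ⁻¹ * ‖a.1‖^2 := by
      have h1 : (∑ i, σ i * ‖L i‖^2) ≤ α^2/τ := by
        rw [le_div_iff₀ hτ]
        linarith [hαL]
      have h2 : (0:ℝ) ≤ ‖a.1‖^2/α := by positivity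
      calc (∑ i, σ i * ‖L i‖^2) * (‖a.1‖^2/α) ≤ (α^2/τ) * (‖a.1‖^2/α) :=
            mul_le_mul_of_nonneg_right h1 h2
        _ = α * τ⁻¹ * ‖a.1‖^2 := by field_simp
    unfold Bil Dg
    rw [real_inner_self_eq_norm_sq]
    have expand : (1-α) * (τ⁻¹ * ‖a.1‖^2 + ∑ i, ((θ1 i)⁻¹ * ‖a.2.1 i‖^2 +
        (θ2 i)⁻¹ * ‖a.2.2.1 i‖^2 + (γ1 i)⁻¹ * ‖a.2.2.2.1 i‖^2 +
        (γ2 i)⁻¹ * ‖a.2.2.2.2.1 i‖^2 + (σ i)⁻¹ * ‖a.2.2.2.2.2 i‖^2))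
        = (1-α) * τ⁻¹ * ‖a.1‖^2 + (1-α) * ∑ i, ((θ1 i)⁻¹ * ‖a.2.1 i‖^2 +
        (θ2 i)⁻¹ * ‖a.2.2.1 i‖^2 + (γ1 i)⁻¹ * ‖a.2.2.2.1 i‖^2 +
        (γ2 i)⁻¹ * ‖a.2.2.2.2.1 i‖^2 + (σ i)⁻¹ * ‖a.2.2.2.2.2 i‖^2) := by ring
    rw [expand]
    linarith [hsum, hS]

end QLow

section Quad

lemma Q_expand_sub (a b : PS H G X Y) :
    Bil θ1 θ2 γ1 γ2 σ L K M τ (a-b) (a-b)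
      = Bil θ1 θ2 γ1 γ2 σ L K M τ a a - 2*Bil θ1 θ2 γ1 γ2 σ L K M τ a b
        + Bil θ1 θ2 γ1 γ2 σ L K M τ b b := by
  simp only [Bil_sub_left, Bil_sub_right]
  rw [Bil_symm θ1 θ2 γ1 γ2 σ L K M τ b a]
  ring

lemma Q_F1 (u w : PS H G X Y) :
    Bil θ1 θ2 γ1 γ2 σ L K M τ w w
      = Bil θ1 θ2 γ1 γ2 σ L K M τ u u - Bil θ1 θ2 γ1 γ2 σ L K M τ (u-w) (u-w)
        - 2*Bil θ1 θ2 γ1 γ2 σ L K M τ (u-w) w := by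
  simp only [Bil_sub_left, Bil_sub_right]
  rw [Bil_symm θ1 θ2 γ1 γ2 σ L K M τ u w]
  ring

lemma Q_F2 (u w : PS H G X Y) (lam : ℝ) :
    Bil θ1 θ2 γ1 γ2 σ L K M τ (u + lam•(w-u)) (u + lam•(w-u))
      = (1-lam)*Bil θ1 θ2 γ1 γ2 σ L K M τ u u + lam*Bil θ1 θ2 γ1 γ2 σ L K M τ w w
        - lam*(1-lam)*Bil θ1 θ2 γ1 γ2 σ L K M τ (u-w) (u-w) := by
  simp only [Bil_add_left, Bil_add_right, Bil_sub_left, Bil_sub_right,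
    Bil_smul_left, Bil_smul_right]
  rw [Bil_symm θ1 θ2 γ1 γ2 σ L K M τ w u]
  ring

lemma Q_smul (r : ℝ) (a : PS H G X Y) :
    Bil θ1 θ2 γ1 γ2 σ L K M τ (r•a) (r•a) = r^2 * Bil θ1 θ2 γ1 γ2 σ L K M τ a a := by
  rw [Bil_smul_left, Bil_smul_right]
  ring

lemma Bil_CS (hQ : ∀ c : PS H G X Y, 0 ≤ Bil θ1 θ2 γ1 γ2 σ L K M τ c c)
    (a b : PS H G X Y) :
    Bil θ1 θ2 γ1 γ2 σ L K M τ a b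
      ≤ Real.sqrt (Bil θ1 θ2 γ1 γ2 σ L K M τ a a) *
        Real.sqrt (Bil θ1 θ2 γ1 γ2 σ L K M τ b b) := by
  have key : ∀ t : ℝ, 0 ≤ (Bil θ1 θ2 γ1 γ2 σ L K M τ b b) * (t*t)
      + (2*Bil θ1 θ2 γ1 γ2 σ L K M τ a b)*t + Bil θ1 θ2 γ1 γ2 σ L K M τ a a := by
    intro t
    have h := hQ (a + t•b)
    have e : Bil θ1 θ2 γ1 γ2 σ L K M τ (a + t•b) (a + t•b)
        = (Bil θ1 θ2 γ1 γ2 σ L K M τ b b) * (t*t)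
          + (2*Bil θ1 θ2 γ1 γ2 σ L K M τ a b)*t + Bil θ1 θ2 γ1 γ2 σ L K M τ a a := by
      simp only [Bil_add_left, Bil_add_right, Bil_smul_left, Bil_smul_right]
      rw [Bil_symm θ1 θ2 γ1 γ2 σ L K M τ b a]
      ring
    rw [e] at h
    exact h
  have hd := discrim_le_zero key
  unfold discrim at hd
  have hsq : (Bil θ1 θ2 γ1 γ2 σ L K M τ a b)^2
      ≤ (Bil θ1 θ2 γ1 γ2 σ L K M τ a a) * (Bil θ1 θ2 γ1 γ2 σ L K M τ b b) := by
    nlinarith [hd]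
  calc Bil θ1 θ2 γ1 γ2 σ L K M τ a b ≤ |Bil θ1 θ2 γ1 γ2 σ L K M τ a b| := le_abs_self _
    _ = Real.sqrt ((Bil θ1 θ2 γ1 γ2 σ L K M τ a b)^2) := (Real.sqrt_sq_eq_abs _).symm
    _ ≤ Real.sqrt ((Bil θ1 θ2 γ1 γ2 σ L K M τ a a) * (Bil θ1 θ2 γ1 γ2 σ L K M τ b b)) :=
        Real.sqrt_le_sqrt hsq
    _ = _ := Real.sqrt_mul (hQ a) _

lemma sqrtQ_triangle (hQ : ∀ c : PS H G X Y, 0 ≤ Bil θ1 θ2 γ1 γ2 σ L K M τ c c)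
    (a b : PS H G X Y) :
    Real.sqrt (Bil θ1 θ2 γ1 γ2 σ L K M τ (a+b) (a+b))
      ≤ Real.sqrt (Bil θ1 θ2 γ1 γ2 σ L K M τ a a)
        + Real.sqrt (Bil θ1 θ2 γ1 γ2 σ L K M τ b b) := by
  have cs := Bil_CS θ1 θ2 γ1 γ2 σ L K M τ hQ a b
  have e : Bil θ1 θ2 γ1 γ2 σ L K M τ (a+b) (a+b)
      = Bil θ1 θ2 γ1 γ2 σ L K M τ a a + 2*Bil θ1 θ2 γ1 γ2 σ L K M τ a b
        + Bil θ1 θ2 γ1 γ2 σ L K M τ b b := by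
    simp only [Bil_add_left, Bil_add_right]
    rw [Bil_symm θ1 θ2 γ1 γ2 σ L K M τ b a]
    ring
  have h2 : Bil θ1 θ2 γ1 γ2 σ L K M τ (a+b) (a+b)
      ≤ (Real.sqrt (Bil θ1 θ2 γ1 γ2 σ L K M τ a a)
        + Real.sqrt (Bil θ1 θ2 γ1 γ2 σ L K M τ b b))^2 := by
    have e2 : (Real.sqrt (Bil θ1 θ2 γ1 γ2 σ L K M τ a a)
        + Real.sqrt (Bil θ1 θ2 γ1 γ2 σ L K M τ b b))^2
        = Bil θ1 θ2 γ1 γ2 σ L K M τ a a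
          + 2*(Real.sqrt (Bil θ1 θ2 γ1 γ2 σ L K M τ a a)
            * Real.sqrt (Bil θ1 θ2 γ1 γ2 σ L K M τ b b))
          + Bil θ1 θ2 γ1 γ2 σ L K M τ b b := by
      rw [add_sq, Real.sq_sqrt (hQ a), Real.sq_sqrt (hQ b)]
      ring
    rw [e, e2]
    linarith
  calc Real.sqrt (Bil θ1 θ2 γ1 γ2 σ L K M τ (a+b) (a+b))
      ≤ Real.sqrt ((Real.sqrt (Bil θ1 θ2 γ1 γ2 σ L K M τ a a)
        + Real.sqrt (Bil θ1 θ2 γ1 γ2 σ L K M τ b b))^2) := Real.sqrt_le_sqrt h2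
    _ = _ := Real.sqrt_sq (by positivity)

end Quad

section Grand

variable [CompleteSpace H] [∀ i, CompleteSpace (G i)] [∀ i, CompleteSpace (X i)]
  [∀ i, CompleteSpace (Y i)]

lemma blk_ident (i : Fin m) (a b : PS H G X Y) :
    blk θ1 θ2 γ1 γ2 σ L K M i a b
    = -⟪b.1, ContinuousLinearMap.adjoint (L i) (a.2.2.2.2.2 i + b.2.2.2.2.2 i)⟫
      + (⟪b.2.1 i, (θ1 i)⁻¹ • a.2.1 i + K i (a.2.2.2.1 i + b.2.2.2.1 i)⟫
      + ⟪b.2.2.1 i, (θ2 i)⁻¹ • a.2.2.1 i + M i (a.2.2.2.2.1 i + b.2.2.2.2.1 i)⟫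
      + ⟪b.2.2.2.1 i, (γ1 i)⁻¹ • a.2.2.2.1 i + ContinuousLinearMap.adjoint (K i) (a.2.1 i)
          - ContinuousLinearMap.adjoint (K i) (b.2.1 i) + b.2.2.2.2.2 i⟫
      + ⟪b.2.2.2.2.1 i, (γ2 i)⁻¹ • a.2.2.2.2.1 i + ContinuousLinearMap.adjoint (M i) (a.2.2.1 i)
          - ContinuousLinearMap.adjoint (M i) (b.2.2.1 i) + b.2.2.2.2.2 i⟫
      + ⟪b.2.2.2.2.2 i, (σ i)⁻¹ • a.2.2.2.2.2 i - L i a.1 + L i b.1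
          - b.2.2.2.1 i - b.2.2.2.2.1 i⟫) := by
  simp only [blk, map_add, inner_add_right, inner_sub_right, real_inner_smul_right,
    ContinuousLinearMap.adjoint_inner_right]
  simp only [real_inner_comm]
  ring

lemma grand (a b : PS H G X Y) (cv : H) :
    Bil θ1 θ2 γ1 γ2 σ L K M τ a b - ⟪b.1, cv⟫
    = ⟪b.1, τ⁻¹ • a.1 - cv
        - ∑ i, ContinuousLinearMap.adjoint (L i) (a.2.2.2.2.2 i + b.2.2.2.2.2 i)⟫
      + ∑ i, (⟪b.2.1 i, (θ1 i)⁻¹ • a.2.1 i + K i (a.2.2.2.1 i + b.2.2.2.1 i)⟫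
      + ⟪b.2.2.1 i, (θ2 i)⁻¹ • a.2.2.1 i + M i (a.2.2.2.2.1 i + b.2.2.2.2.1 i)⟫
      + ⟪b.2.2.2.1 i, (γ1 i)⁻¹ • a.2.2.2.1 i + ContinuousLinearMap.adjoint (K i) (a.2.1 i)
          - ContinuousLinearMap.adjoint (K i) (b.2.1 i) + b.2.2.2.2.2 i⟫
      + ⟪b.2.2.2.2.1 i, (γ2 i)⁻¹ • a.2.2.2.2.1 i + ContinuousLinearMap.adjoint (M i) (a.2.2.1 i)
          - ContinuousLinearMap.adjoint (M i) (b.2.2.1 i) + b.2.2.2.2.2 i⟫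
      + ⟪b.2.2.2.2.2 i, (σ i)⁻¹ • a.2.2.2.2.2 i - L i a.1 + L i b.1
          - b.2.2.2.1 i - b.2.2.2.2.1 i⟫) := by
  rw [show τ⁻¹ • a.1 - cv
        - ∑ i, ContinuousLinearMap.adjoint (L i) (a.2.2.2.2.2 i + b.2.2.2.2.2 i)
      = τ⁻¹ • a.1 - cv
        - ∑ i, ContinuousLinearMap.adjoint (L i) (a.2.2.2.2.2 i + b.2.2.2.2.2 i) from rfl]
  rw [inner_sub_right, inner_sub_right, inner_sum]
  unfold Bil
  simp only [blk_ident]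
  rw [Finset.sum_add_distrib]
  simp only [Finset.sum_neg_distrib]
  rw [real_inner_smul_right, real_inner_comm a.1 b.1]
  ring

end Grand

/-- ℓ¹-type norm of components -/
def NC (a : PS H G X Y) : ℝ :=
  ‖a.1‖ + ∑ i, (‖a.2.1 i‖ + ‖a.2.2.1 i‖ + ‖a.2.2.2.1 i‖ + ‖a.2.2.2.2.1 i‖ + ‖a.2.2.2.2.2 i‖)

/-- global coefficient bound -/
def CB : ℝ :=
  τ⁻¹ + ∑ i, ((θ1 i)⁻¹ + (θ2 i)⁻¹ + (γ1 i)⁻¹ + (γ2 i)⁻¹ + (σ i)⁻¹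
    + 2*‖L i‖ + 2*‖K i‖ + 2*‖M i‖)

lemma NC_nonneg (a : PS H G X Y) : 0 ≤ NC a := by
  unfold NC
  have h : ∀ i ∈ (Finset.univ : Finset (Fin m)), (0:ℝ) ≤ ‖a.2.1 i‖ + ‖a.2.2.1 i‖
      + ‖a.2.2.2.1 i‖ + ‖a.2.2.2.2.1 i‖ + ‖a.2.2.2.2.2 i‖ := by
    intro i _; positivity
  have := Finset.sum_nonneg h
  have := norm_nonneg a.1
  linarith

lemma CB_nonneg (hθ1 : ∀ i, 0 < θ1 i) (hθ2 : ∀ i, 0 < θ2 i) (hγ1 : ∀ i, 0 < γ1 i)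
    (hγ2 : ∀ i, 0 < γ2 i) (hσ : ∀ i, 0 < σ i) (hτ : 0 < τ) :
    0 ≤ CB θ1 θ2 γ1 γ2 σ L K M τ := by
  unfold CB
  have h : ∀ i ∈ (Finset.univ : Finset (Fin m)), (0:ℝ) ≤ (θ1 i)⁻¹ + (θ2 i)⁻¹ + (γ1 i)⁻¹
      + (γ2 i)⁻¹ + (σ i)⁻¹ + 2*‖L i‖ + 2*‖K i‖ + 2*‖M i‖ := by
    intro i _
    have := hθ1 i; have := hθ2 i; have := hγ1 i; have := hγ2 i; have := hσ i
    have := norm_nonneg (L i); have := norm_nonneg (K i); have := norm_nonneg (M i)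
    positivity
  have := Finset.sum_nonneg h
  have : (0:ℝ) ≤ τ⁻¹ := by positivity
  linarith [Finset.sum_nonneg h]

lemma Q_up (hθ1 : ∀ i, 0 < θ1 i) (hθ2 : ∀ i, 0 < θ2 i) (hγ1 : ∀ i, 0 < γ1 i)
    (hγ2 : ∀ i, 0 < γ2 i) (hσ : ∀ i, 0 < σ i) (hτ : 0 < τ) (a : PS H G X Y) :
    Bil θ1 θ2 γ1 γ2 σ L K M τ a a ≤ CB θ1 θ2 γ1 γ2 σ L K M τ * (NC a)^2 := by
  have hN := NC_nonneg (a := a)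
  have hcomp : ∀ i : Fin m, ‖a.2.1 i‖ ≤ NC a ∧ ‖a.2.2.1 i‖ ≤ NC a ∧ ‖a.2.2.2.1 i‖ ≤ NC a
      ∧ ‖a.2.2.2.2.1 i‖ ≤ NC a ∧ ‖a.2.2.2.2.2 i‖ ≤ NC a := by
    intro i
    have hterm : ‖a.2.1 i‖ + ‖a.2.2.1 i‖ + ‖a.2.2.2.1 i‖ + ‖a.2.2.2.2.1 i‖ + ‖a.2.2.2.2.2 i‖
        ≤ ∑ j, (‖a.2.1 j‖ + ‖a.2.2.1 j‖ + ‖a.2.2.2.1 j‖ + ‖a.2.2.2.2.1 j‖ + ‖a.2.2.2.2.2 j‖) := by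
      apply Finset.single_le_sum (f := fun j => ‖a.2.1 j‖ + ‖a.2.2.1 j‖ + ‖a.2.2.2.1 j‖
        + ‖a.2.2.2.2.1 j‖ + ‖a.2.2.2.2.2 j‖) (fun j _ => by positivity) (Finset.mem_univ i)
    unfold NC
    have h1 := norm_nonneg (a.2.1 i); have h2 := norm_nonneg (a.2.2.1 i)
    have h3 := norm_nonneg (a.2.2.2.1 i); have h4 := norm_nonneg (a.2.2.2.2.1 i)
    have h5 := norm_nonneg (a.2.2.2.2.2 i); have h0 := norm_nonneg a.1
    refine ⟨by linarith, by linarith, by linarith, by linarith, by linarith⟩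
  have hx : ‖a.1‖ ≤ NC a := by
    unfold NC
    have h : (0:ℝ) ≤ ∑ i, (‖a.2.1 i‖ + ‖a.2.2.1 i‖ + ‖a.2.2.2.1 i‖ + ‖a.2.2.2.2.1 i‖
        + ‖a.2.2.2.2.2 i‖) :=
      Finset.sum_nonneg (fun i _ => by positivity)
    linarith
  have per : ∀ i ∈ (Finset.univ : Finset (Fin m)),
      blk θ1 θ2 γ1 γ2 σ L K M i a a ≤ ((θ1 i)⁻¹ + (θ2 i)⁻¹ + (γ1 i)⁻¹ + (γ2 i)⁻¹ + (σ i)⁻¹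
        + 2*‖L i‖ + 2*‖K i‖ + 2*‖M i‖) * (NC a)^2 := by
    intro i _
    obtain ⟨c1, c2, c3, c4, c5⟩ := hcomp i
    unfold blk
    simp only [real_inner_self_eq_norm_sq]
    have bL : |⟪L i a.1, a.2.2.2.2.2 i⟫| ≤ ‖L i‖ * (NC a)^2 := by
      refine (abs_real_inner_le_norm _ _).trans ?_
      calc ‖L i a.1‖ * ‖a.2.2.2.2.2 i‖ ≤ (‖L i‖ * ‖a.1‖) * ‖a.2.2.2.2.2 i‖ :=
            mul_le_mul_of_nonneg_right ((L i).le_opNorm _) (norm_nonneg _)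
        _ ≤ (‖L i‖ * NC a) * NC a := by
            apply mul_le_mul (mul_le_mul_of_nonneg_left hx (norm_nonneg _)) c5 (norm_nonneg _)
            positivity
        _ = ‖L i‖ * (NC a)^2 := by ring
    have bK : |⟪K i (a.2.2.2.1 i), a.2.1 i⟫| ≤ ‖K i‖ * (NC a)^2 := by
      refine (abs_real_inner_le_norm _ _).trans ?_
      calc ‖K i (a.2.2.2.1 i)‖ * ‖a.2.1 i‖ ≤ (‖K i‖ * ‖a.2.2.2.1 i‖) * ‖a.2.1 i‖ :=
            mul_le_mul_of_nonneg_right ((K i).le_opNorm _) (norm_nonneg _)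
        _ ≤ (‖K i‖ * NC a) * NC a := by
            apply mul_le_mul (mul_le_mul_of_nonneg_left c3 (norm_nonneg _)) c1 (norm_nonneg _)
            positivity
        _ = ‖K i‖ * (NC a)^2 := by ring
    have bM : |⟪M i (a.2.2.2.2.1 i), a.2.2.1 i⟫| ≤ ‖M i‖ * (NC a)^2 := by
      refine (abs_real_inner_le_norm _ _).trans ?_
      calc ‖M i (a.2.2.2.2.1 i)‖ * ‖a.2.2.1 i‖ ≤ (‖M i‖ * ‖a.2.2.2.2.1 i‖) * ‖a.2.2.1 i‖ :=
            mul_le_mul_of_nonneg_right ((M i).le_opNorm _) (norm_nonneg _)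
        _ ≤ (‖M i‖ * NC a) * NC a := by
            apply mul_le_mul (mul_le_mul_of_nonneg_left c4 (norm_nonneg _)) c2 (norm_nonneg _)
            positivity
        _ = ‖M i‖ * (NC a)^2 := by ring
    have d1 : (θ1 i)⁻¹ * ‖a.2.1 i‖^2 ≤ (θ1 i)⁻¹ * (NC a)^2 := by
      apply mul_le_mul_of_nonneg_left _ (by have := hθ1 i; positivity)
      exact pow_le_pow_left₀ (norm_nonneg _) c1 2
    have d2 : (θ2 i)⁻¹ * ‖a.2.2.1 i‖^2 ≤ (θ2 i)⁻¹ * (NC a)^2 := by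
      apply mul_le_mul_of_nonneg_left _ (by have := hθ2 i; positivity)
      exact pow_le_pow_left₀ (norm_nonneg _) c2 2
    have d3 : (γ1 i)⁻¹ * ‖a.2.2.2.1 i‖^2 ≤ (γ1 i)⁻¹ * (NC a)^2 := by
      apply mul_le_mul_of_nonneg_left _ (by have := hγ1 i; positivity)
      exact pow_le_pow_left₀ (norm_nonneg _) c3 2
    have d4 : (γ2 i)⁻¹ * ‖a.2.2.2.2.1 i‖^2 ≤ (γ2 i)⁻¹ * (NC a)^2 := by
      apply mul_le_mul_of_nonneg_left _ (by have := hγ2 i; positivity)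
      exact pow_le_pow_left₀ (norm_nonneg _) c4 2
    have d5 : (σ i)⁻¹ * ‖a.2.2.2.2.2 i‖^2 ≤ (σ i)⁻¹ * (NC a)^2 := by
      apply mul_le_mul_of_nonneg_left _ (by have := hσ i; positivity)
      exact pow_le_pow_left₀ (norm_nonneg _) c5 2
    have eL := abs_nonneg ⟪L i a.1, a.2.2.2.2.2 i⟫
    have eK := neg_abs_le ⟪K i (a.2.2.2.1 i), a.2.1 i⟫
    have eM := neg_abs_le ⟪M i (a.2.2.2.2.1 i), a.2.2.1 i⟫
    have eL2 := neg_abs_le ⟪L i a.1, a.2.2.2.2.2 i⟫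
    have eK2 := le_abs_self ⟪K i (a.2.2.2.1 i), a.2.1 i⟫
    have eM2 := le_abs_self ⟪M i (a.2.2.2.2.1 i), a.2.2.1 i⟫
    linarith
  have hsum := Finset.sum_le_sum per
  rw [← Finset.sum_mul] at hsum
  unfold Bil CB
  rw [real_inner_self_eq_norm_sq]
  have hx2 : τ⁻¹ * ‖a.1‖^2 ≤ τ⁻¹ * (NC a)^2 := by
    apply mul_le_mul_of_nonneg_left _ (by positivity)
    exact pow_le_pow_left₀ (norm_nonneg _) hx 2
  rw [add_mul]
  linarith

end Aux

set_option maxHeartbeats 2000000 in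
theorem stmt1 {m : ℕ}
    {H : Type*} [NormedAddCommGroup H] [InnerProductSpace ℝ H] [CompleteSpace H]
    {G : Fin m → Type*} [∀ i, NormedAddCommGroup (G i)] [∀ i, InnerProductSpace ℝ (G i)]
    [∀ i, CompleteSpace (G i)]
    {X : Fin m → Type*} [∀ i, NormedAddCommGroup (X i)] [∀ i, InnerProductSpace ℝ (X i)]
    [∀ i, CompleteSpace (X i)]
    {Y : Fin m → Type*} [∀ i, NormedAddCommGroup (Y i)] [∀ i, InnerProductSpace ℝ (Y i)]
    [∀ i, CompleteSpace (Y i)]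
    (z : H) (A : H → Set H) (hA : MaxMonoOp A)
    (μ : ℝ) (hμ : 0 < μ) (C : H → H)
    (hCmono : ∀ x y : H, (0:ℝ) ≤ ⟪x - y, C x - C y⟫)
    (r : ∀ i, G i)
    (B : ∀ i, X i → Set (X i)) (hB : ∀ i, MaxMonoOp (B i))
    (D : ∀ i, Y i → Set (Y i)) (hD : ∀ i, MaxMonoOp (D i))
    (L : ∀ i, H →L[ℝ] G i) (hL : ∀ i, L i ≠ 0)
    (K : ∀ i, G i →L[ℝ] X i) (hK : ∀ i, K i ≠ 0)
    (M : ∀ i, G i →L[ℝ] Y i) (hM : ∀ i, M i ≠ 0)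
    (hCco : ∀ x y : H, μ⁻¹ * ‖C x - C y‖ ^ 2 ≤ ⟪x - y, C x - C y⟫)
    -- step sizes
    (τ : ℝ) (hτ : 0 < τ)
    (θ1 θ2 γ1 γ2 σ : Fin m → ℝ)
    (hθ1 : ∀ i, 0 < θ1 i) (hθ2 : ∀ i, 0 < θ2 i)
    (hγ1 : ∀ i, 0 < γ1 i) (hγ2 : ∀ i, 0 < γ2 i) (hσ : ∀ i, 0 < σ i)
    (α : ℝ)
    (hα : IsGreatest ({Real.sqrt (τ * ∑ i, σ i * ‖L i‖ ^ 2)} ∪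
        Set.range (fun j => Real.sqrt (θ1 j * γ1 j * ‖K j‖ ^ 2)) ∪
        Set.range (fun j => Real.sqrt (θ2 j * γ2 j * ‖M j‖ ^ 2))) α)
    -- `2 μ⁻¹ (1 - α) · min{1/τ, 1/θ1ᵢ, 1/θ2ᵢ, 1/γ1ᵢ, 1/γ2ᵢ, 1/σᵢ} > 1`
    (hstep : 1 < 2 * μ⁻¹ * (1 - α) * (1 / τ) ∧ ∀ i,
        1 < 2 * μ⁻¹ * (1 - α) * (1 / θ1 i) ∧ 1 < 2 * μ⁻¹ * (1 - α) * (1 / θ2 i) ∧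
        1 < 2 * μ⁻¹ * (1 - α) * (1 / γ1 i) ∧ 1 < 2 * μ⁻¹ * (1 - α) * (1 / γ2 i) ∧
        1 < 2 * μ⁻¹ * (1 - α) * (1 / σ i))
    -- range condition
    (hran : ∃ (x : H) (u : H) (w : ∀ i, G i), u ∈ A x ∧
        (∀ i, w i ∈ parOp (compOp (K i) (B i)) (compOp (M i) (D i)) (L i x - r i)) ∧
        z = u + ∑ i, ContinuousLinearMap.adjoint (L i) (w i) + C x)
    -- relaxation parameters
    (ε : ℝ) (hε : ε ∈ Set.Ioo (0:ℝ) 1) (lam : ℕ → ℝ) (hlam : ∀ n, lam n ∈ Set.Icc ε 1)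
    -- the sequences generated by Algorithm 3.1
    (x xt : ℕ → H)
    (p pt : ℕ → ∀ i, X i) (q qt : ℕ → ∀ i, Y i)
    (zz zt y yt v vt u1 u2 : ℕ → ∀ i, G i)
    (hxt : ∃ j : ℕ → H,
      (∀ n, IsRes τ A
        (x n - τ • (C (x n) + ∑ i, ContinuousLinearMap.adjoint (L i) (v n i) - z)) (j n)) ∧
      Summable (fun n => ‖xt n - j n‖))
    (hpt : ∀ i, ∃ j : ℕ → X i,
      (∀ n, IsRes (θ1 i) (invOp (B i)) (p n i + θ1 i • K i (zz n i)) (j n)) ∧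
      Summable (fun n => ‖pt n i - j n‖))
    (hqt : ∀ i, ∃ j : ℕ → Y i,
      (∀ n, IsRes (θ2 i) (invOp (D i)) (q n i + θ2 i • M i (y n i)) (j n)) ∧
      Summable (fun n => ‖qt n i - j n‖))
    (hu1 : ∀ i, Summable (fun n => ‖u1 n i - (zz n i + γ1 i •
        (ContinuousLinearMap.adjoint (K i) (p n i - (2:ℝ) • pt n i) + v n i +
          σ i • (L i ((2:ℝ) • xt n - x n) - r i)))‖))
    (hu2 : ∀ i, Summable (fun n => ‖u2 n i - (y n i + γ2 i •
        (ContinuousLinearMap.adjoint (M i) (q n i - (2:ℝ) • qt n i) + v n i +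
          σ i • (L i ((2:ℝ) • xt n - x n) - r i)))‖))
    (hzt : ∀ i, Summable (fun n => ‖zt n i -
        ((1 + σ i * γ2 i) / (1 + σ i * (γ1 i + γ2 i))) •
          (u1 n i - (σ i * γ1 i / (1 + σ i * γ2 i)) • u2 n i)‖))
    (hyt : ∀ i, Summable (fun n => ‖yt n i -
        (1 / (1 + σ i * γ2 i)) • (u2 n i - (σ i * γ2 i) • zt n i)‖))
    (hvt : ∀ i, Summable (fun n => ‖vt n i -
        (v n i + σ i • (L i ((2:ℝ) • xt n - x n) - r i - zt n i - yt n i))‖))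
    (hx : ∀ n, x (n+1) = x n + lam n • (xt n - x n))
    (hp : ∀ n i, p (n+1) i = p n i + lam n • (pt n i - p n i))
    (hq : ∀ n i, q (n+1) i = q n i + lam n • (qt n i - q n i))
    (hz : ∀ n i, zz (n+1) i = zz n i + lam n • (zt n i - zz n i))
    (hy : ∀ n i, y (n+1) i = y n i + lam n • (yt n i - y n i))
    (hv : ∀ n i, v (n+1) i = v n i + lam n • (vt n i - v n i))
    -- the primal-dual solution to which the sequences converge weakly
    (xb : H) (pb : ∀ i, X i) (qb : ∀ i, Y i) (yb : ∀ i, G i)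
    (hsol : (z - ∑ i, ContinuousLinearMap.adjoint (L i)
          (ContinuousLinearMap.adjoint (K i) (pb i)) - C xb ∈ A xb) ∧
      (∀ i, K i (L i xb - yb i - r i) ∈ invOp (B i) (pb i)) ∧
      (∀ i, M i (yb i) ∈ invOp (D i) (qb i)) ∧
      (∀ i, ContinuousLinearMap.adjoint (K i) (pb i) =
          ContinuousLinearMap.adjoint (M i) (qb i)) ∧
      WConv x xb ∧
      (∀ i, WConv (fun n => p n i) (pb i)) ∧
      (∀ i, WConv (fun n => q n i) (qb i)) ∧
      (∀ i, WConv (fun n => y n i) (yb i)))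
    -- `C` is uniformly monotone at `xb`
    (hunif : ∃ φ : ℝ → ℝ≥0∞, MonotoneOn φ (Set.Ici 0) ∧
      (∀ t : ℝ, 0 ≤ t → (φ t = 0 ↔ t = 0)) ∧
      (∀ w : H, φ ‖w - xb‖ ≤ ENNReal.ofReal ⟪w - xb, C w - C xb⟫)) :
    Tendsto x atTop (𝓝 xb) := by
  classical
  obtain ⟨hstep1, hstepi⟩ := hstep
  obtain ⟨hsol1, hsol2, hsol3, hsol4, hwx, hwp, hwq, hwy⟩ := hsol
  -- constants
  have hαub := hα.2
  have hα0 : 0 ≤ α := by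
    rcases hα.1 with (h | h) | h
    · rw [Set.mem_singleton_iff] at h; rw [h]; exact Real.sqrt_nonneg _
    · obtain ⟨j, hj⟩ := h; rw [← hj]; exact Real.sqrt_nonneg _
    · obtain ⟨j, hj⟩ := h; rw [← hj]; exact Real.sqrt_nonneg _
  have hαL : τ * ∑ i, σ i * ‖L i‖^2 ≤ α^2 := by
    have hmem : Real.sqrt (τ * ∑ i, σ i * ‖L i‖^2) ∈
        ({Real.sqrt (τ * ∑ i, σ i * ‖L i‖ ^ 2)} ∪
          Set.range (fun j => Real.sqrt (θ1 j * γ1 j * ‖K j‖ ^ 2)) ∪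
          Set.range (fun j => Real.sqrt (θ2 j * γ2 j * ‖M j‖ ^ 2))) := by
      left; left; rfl
    have h1 : Real.sqrt (τ * ∑ i, σ i * ‖L i‖^2) ≤ α := hαub hmem
    have h2 : (0:ℝ) ≤ τ * ∑ i, σ i * ‖L i‖^2 := by
      apply mul_nonneg hτ.le
      exact Finset.sum_nonneg (fun i _ => mul_nonneg (hσ i).le (by positivity))
    calc τ * ∑ i, σ i * ‖L i‖^2 = (Real.sqrt (τ * ∑ i, σ i * ‖L i‖^2))^2 :=
          (Real.sq_sqrt h2).symm
      _ ≤ α^2 := by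
          apply pow_le_pow_left₀ (Real.sqrt_nonneg _) h1
  have hαK : ∀ i, Real.sqrt (θ1 i * γ1 i * ‖K i‖^2) ≤ α := by
    intro i
    exact hαub (Or.inl (Or.inr ⟨i, rfl⟩))
  have hαM : ∀ i, Real.sqrt (θ2 i * γ2 i * ‖M i‖^2) ≤ α := by
    intro i
    exact hαub (Or.inr ⟨i, rfl⟩)
  have hμi : 0 < μ⁻¹ := inv_pos.mpr hμ
  have hτi : 0 < τ⁻¹ := inv_pos.mpr hτ
  have hα1 : α < 1 := by
    by_contra hcon
    push_neg at hcon
    have : 2 * μ⁻¹ * (1 - α) * (1/τ) ≤ 0 := by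
      have h1 : 1 - α ≤ 0 := by linarith
      have h2 : (0:ℝ) < 2 * μ⁻¹ * (1/τ) := by positivity
      nlinarith
    linarith
  have hβ : μ/2 < (1-α) * τ⁻¹ := by
    rw [one_div] at hstep1
    have hμc : μ * μ⁻¹ = 1 := mul_inv_cancel₀ hμ.ne'
    nlinarith [mul_pos hμ hτ, mul_pos hμi hτi, hstep1]
  have hβ0 : 0 < (1-α) * τ⁻¹ := lt_trans (by positivity) hβ
  obtain ⟨κ, hκdef⟩ : ∃ c : ℝ, c = 2*μ⁻¹ - ((1-α) * τ⁻¹)⁻¹ := ⟨_, rfl⟩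
  have hκ : 0 < κ := by
    rw [hκdef]
    have h1 : ((1-α) * τ⁻¹)⁻¹ < (μ/2)⁻¹ := by
      apply inv_strictAnti₀ (by positivity) hβ
    have h2 : (μ/2)⁻¹ = 2*μ⁻¹ := by
      rw [div_eq_mul_inv, mul_inv, inv_inv]; ring
    linarith [h1, h2 ▸ h1]
  have hbracket : ∀ t c : ℝ, κ * c^2 ≤ ((1-α)*τ⁻¹) * t^2 - 2*(t*c) + 2*μ⁻¹*c^2 :=
    fun t c => bracket_aux hβ0 hκdef
  -- exact resolvent sequences
  obtain ⟨jx, hjx, hjxsum⟩ := hxt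
  choose jp hjp hjpsum using hpt
  choose jq hjq hjqsum using hqt
  have hd1 : ∀ i, 0 < 1 + σ i * γ2 i := fun i => by nlinarith [hσ i, hγ2 i]
  have hd2 : ∀ i, 0 < 1 + σ i * (γ1 i + γ2 i) := fun i => by nlinarith [hσ i, hγ1 i, hγ2 i]
  obtain ⟨u1e, hu1e⟩ : ∃ f : ℕ → ∀ i, G i, ∀ n i, f n i = zz n i + γ1 i •
    (ContinuousLinearMap.adjoint (K i) (p n i - (2:ℝ) • jp i n) + v n i +
      σ i • (L i ((2:ℝ) • jx n - x n) - r i)) := ⟨_, fun _ _ => rfl⟩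
  obtain ⟨u2e, hu2e⟩ : ∃ f : ℕ → ∀ i, G i, ∀ n i, f n i = y n i + γ2 i •
    (ContinuousLinearMap.adjoint (M i) (q n i - (2:ℝ) • jq i n) + v n i +
      σ i • (L i ((2:ℝ) • jx n - x n) - r i)) := ⟨_, fun _ _ => rfl⟩
  obtain ⟨zze, hzze⟩ : ∃ f : ℕ → ∀ i, G i, ∀ n i, f n i =
    ((1 + σ i * γ2 i) / (1 + σ i * (γ1 i + γ2 i))) •
    (u1e n i - (σ i * γ1 i / (1 + σ i * γ2 i)) • u2e n i) := ⟨_, fun _ _ => rfl⟩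
  obtain ⟨yye, hyye⟩ : ∃ f : ℕ → ∀ i, G i, ∀ n i, f n i = (1 / (1 + σ i * γ2 i)) •
    (u2e n i - (σ i * γ2 i) • zze n i) := ⟨_, fun _ _ => rfl⟩
  obtain ⟨vve, hvve⟩ : ∃ f : ℕ → ∀ i, G i, ∀ n i, f n i = v n i +
    σ i • (L i ((2:ℝ) • jx n - x n) - r i - zze n i - yye n i) := ⟨_, fun _ _ => rfl⟩
  have relsum2 : ∀ n i, yye n i + (σ i * γ2 i) • (zze n i + yye n i) = u2e n i := by
    intro n i
    have e1 := (hd1 i).ne'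
    simp only [hyye]
    match_scalars <;> (field_simp; try ring)
  have relsum1 : ∀ n i, zze n i + (σ i * γ1 i) • (zze n i + yye n i) = u1e n i := by
    intro n i
    have e1 := (hd1 i).ne'
    have e2 := (hd2 i).ne'
    simp only [hzze, hyye]
    match_scalars <;> (field_simp; try ring)
  -- tuples
  obtain ⟨ξ, hξ⟩ : ∃ f : ℕ → PS H G X Y, f = fun n => (x n, p n, q n, zz n, y n, v n) :=
    ⟨_, rfl⟩
  obtain ⟨ξe, hξe⟩ : ∃ f : ℕ → PS H G X Y, f = fun n => (jx n, fun i => jp i n,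
    fun i => jq i n, zze n, yye n, vve n) := ⟨_, rfl⟩
  obtain ⟨ξs, hξs⟩ : ∃ a : PS H G X Y, a = (xb, pb, qb, fun i => L i xb - yb i - r i, yb,
    fun i => ContinuousLinearMap.adjoint (K i) (pb i)) := ⟨_, rfl⟩
  obtain ⟨ξt, hξt⟩ : ∃ f : ℕ → PS H G X Y, f = fun n => (xt n, pt n, qt n, zt n, yt n, vt n) :=
    ⟨_, rfl⟩
  -- the key monotonicity inequality
  have star : ∀ n, ⟪jx n - xb, C (x n) - C xb⟫ ≤
      Bil θ1 θ2 γ1 γ2 σ L K M τ (ξ n - ξe n) (ξe n - ξs) := by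
    intro n
    have hg := grand θ1 θ2 γ1 γ2 σ L K M τ (ξ n - ξe n) (ξe n - ξs) (C (x n) - C xb)
    simp only [hξ, hξe, hξs, Prod.mk_sub_mk, Pi.sub_apply] at hg ⊢
    have hTA : 0 ≤ ⟪jx n - xb, τ⁻¹ • (x n - jx n) - (C (x n) - C xb)
        - ∑ i, ContinuousLinearMap.adjoint (L i)
          ((v n i - vve n i) + (vve n i - ContinuousLinearMap.adjoint (K i) (pb i)))⟫ := by
      have mem1 : τ⁻¹ • ((x n - τ • (C (x n) + ∑ i, ContinuousLinearMap.adjoint (L i) (v n i)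
          - z)) - jx n) ∈ A (jx n) := isRes_mem hτ.ne' (hjx n)
      have mem2 : z - ∑ i, ContinuousLinearMap.adjoint (L i)
          (ContinuousLinearMap.adjoint (K i) (pb i)) - C xb ∈ A xb := hsol1
      have h0 := hA.1 mem1 mem2
      have e : τ⁻¹ • ((x n - τ • (C (x n) + ∑ i, ContinuousLinearMap.adjoint (L i) (v n i)
            - z)) - jx n) - (z - ∑ i, ContinuousLinearMap.adjoint (L i)
            (ContinuousLinearMap.adjoint (K i) (pb i)) - C xb)
          = τ⁻¹ • (x n - jx n) - (C (x n) - C xb)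
            - ∑ i, ContinuousLinearMap.adjoint (L i)
              ((v n i - vve n i) + (vve n i - ContinuousLinearMap.adjoint (K i) (pb i))) := by
        have e1 : ∀ i, (v n i - vve n i) + (vve n i
            - ContinuousLinearMap.adjoint (K i) (pb i))
            = v n i - ContinuousLinearMap.adjoint (K i) (pb i) := fun i => by abel
        have e2 := hτ.ne'
        simp only [e1, map_sub]
        rw [Finset.sum_sub_distrib]
        match_scalars <;> (field_simp; try ring)
      rw [e] at h0
      exact h0
    have hSum : 0 ≤ ∑ i,
        (⟪jp i n - pb i, (θ1 i)⁻¹ • (p n i - jp i n)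
          + K i ((zz n i - zze n i) + (zze n i - (L i xb - yb i - r i)))⟫
        + ⟪jq i n - qb i, (θ2 i)⁻¹ • (q n i - jq i n)
          + M i ((y n i - yye n i) + (yye n i - yb i))⟫
        + ⟪zze n i - (L i xb - yb i - r i), (γ1 i)⁻¹ • (zz n i - zze n i)
          + ContinuousLinearMap.adjoint (K i) (p n i - jp i n)
          - ContinuousLinearMap.adjoint (K i) (jp i n - pb i)
          + (vve n i - ContinuousLinearMap.adjoint (K i) (pb i))⟫
        + ⟪yye n i - yb i, (γ2 i)⁻¹ • (y n i - yye n i)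
          + ContinuousLinearMap.adjoint (M i) (q n i - jq i n)
          - ContinuousLinearMap.adjoint (M i) (jq i n - qb i)
          + (vve n i - ContinuousLinearMap.adjoint (K i) (pb i))⟫
        + ⟪vve n i - ContinuousLinearMap.adjoint (K i) (pb i),
            (σ i)⁻¹ • (v n i - vve n i) - L i (x n - jx n) + L i (jx n - xb)
          - (zze n i - (L i xb - yb i - r i)) - (yye n i - yb i)⟫) := by
      apply Finset.sum_nonneg
      intro i _
      have hTB : 0 ≤ ⟪jp i n - pb i, (θ1 i)⁻¹ • (p n i - jp i n)
          + K i ((zz n i - zze n i) + (zze n i - (L i xb - yb i - r i)))⟫ := by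
        have mem1 : (θ1 i)⁻¹ • ((p n i + θ1 i • K i (zz n i)) - jp i n)
            ∈ invOp (B i) (jp i n) := isRes_mem (hθ1 i).ne' (hjp i n)
        have mem2 : K i (L i xb - yb i - r i) ∈ invOp (B i) (pb i) := hsol2 i
        have h0 := monoOp_inv (hB i).1 mem1 mem2
        have e : (θ1 i)⁻¹ • ((p n i + θ1 i • K i (zz n i)) - jp i n)
            - K i (L i xb - yb i - r i)
            = (θ1 i)⁻¹ • (p n i - jp i n)
              + K i ((zz n i - zze n i) + (zze n i - (L i xb - yb i - r i))) := by
          have e2 := (hθ1 i).ne'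
          simp only [map_add, map_sub]
          match_scalars <;> (field_simp; try ring)
        rw [e] at h0
        exact h0
      have hTD : 0 ≤ ⟪jq i n - qb i, (θ2 i)⁻¹ • (q n i - jq i n)
          + M i ((y n i - yye n i) + (yye n i - yb i))⟫ := by
        have mem1 : (θ2 i)⁻¹ • ((q n i + θ2 i • M i (y n i)) - jq i n)
            ∈ invOp (D i) (jq i n) := isRes_mem (hθ2 i).ne' (hjq i n)
        have mem2 : M i (yb i) ∈ invOp (D i) (qb i) := hsol3 i
        have h0 := monoOp_inv (hD i).1 mem1 mem2
        have e : (θ2 i)⁻¹ • ((q n i + θ2 i • M i (y n i)) - jq i n) - M i (yb i)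
            = (θ2 i)⁻¹ • (q n i - jq i n)
              + M i ((y n i - yye n i) + (yye n i - yb i)) := by
          have e2 := (hθ2 i).ne'
          simp only [map_add, map_sub]
          match_scalars <;> (field_simp; try ring)
        rw [e] at h0
        exact h0
      have hEz : (γ1 i)⁻¹ • (zz n i - zze n i)
          + ContinuousLinearMap.adjoint (K i) (p n i - jp i n)
          - ContinuousLinearMap.adjoint (K i) (jp i n - pb i)
          + (vve n i - ContinuousLinearMap.adjoint (K i) (pb i)) = 0 := by
        rw [show zz n i - zze n i
            = (zz n i - u1e n i) + (σ i * γ1 i) • (zze n i + yye n i) from by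
          rw [← relsum1 n i]; abel]
        have e2 := (hγ1 i).ne'
        have e3 := (hσ i).ne'
        simp only [hu1e, hvve, map_sub, map_add, map_smul]
        match_scalars <;> (field_simp; try ring)
      have hEy : (γ2 i)⁻¹ • (y n i - yye n i)
          + ContinuousLinearMap.adjoint (M i) (q n i - jq i n)
          - ContinuousLinearMap.adjoint (M i) (jq i n - qb i)
          + (vve n i - ContinuousLinearMap.adjoint (K i) (pb i)) = 0 := by
        rw [show y n i - yye n i
            = (y n i - u2e n i) + (σ i * γ2 i) • (zze n i + yye n i) from by
          rw [← relsum2 n i]; abel]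
        rw [hsol4 i]
        have e2 := (hγ2 i).ne'
        have e3 := (hσ i).ne'
        simp only [hu2e, hvve, map_sub, map_add, map_smul]
        match_scalars <;> (field_simp; try ring)
      have hEv : (σ i)⁻¹ • (v n i - vve n i) - L i (x n - jx n) + L i (jx n - xb)
          - (zze n i - (L i xb - yb i - r i)) - (yye n i - yb i) = 0 := by
        have e2 := (hσ i).ne'
        simp only [hvve, map_sub, map_add, map_smul]
        match_scalars <;> (field_simp; try ring)
      rw [hEz, hEy, hEv]
      simp only [inner_zero_right]
      linarith
    linarith [hg, hTA, hSum]
  -- quadratic form facts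
  have hQnn : ∀ c : PS H G X Y, 0 ≤ Bil θ1 θ2 γ1 γ2 σ L K M τ c c := by
    intro c
    have h1 := Q_low θ1 θ2 γ1 γ2 σ L K M τ hθ1 hθ2 hγ1 hγ2 hσ hτ hα0 hαL hαK hαM hL c
    have h2 := Dg_nonneg θ1 θ2 γ1 γ2 σ τ hθ1 hθ2 hγ1 hγ2 hσ hτ c
    have h3 : 0 ≤ (1-α) * Dg θ1 θ2 γ1 γ2 σ τ c := mul_nonneg (by linarith) h2
    linarith
  have hQx : ∀ c : PS H G X Y, (1-α) * τ⁻¹ * ‖c.1‖^2 ≤ Bil θ1 θ2 γ1 γ2 σ L K M τ c c := by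
    intro c
    have h1 := Q_low θ1 θ2 γ1 γ2 σ L K M τ hθ1 hθ2 hγ1 hγ2 hσ hτ hα0 hαL hαK hαM hL c
    have h2 := Dg_ge_x θ1 θ2 γ1 γ2 σ τ hθ1 hθ2 hγ1 hγ2 hσ hτ c
    have h3 : (1-α) * (τ⁻¹ * ‖c.1‖^2) ≤ (1-α) * Dg θ1 θ2 γ1 γ2 σ τ c :=
      mul_le_mul_of_nonneg_left h2 (by linarith)
    calc (1-α) * τ⁻¹ * ‖c.1‖^2 = (1-α) * (τ⁻¹ * ‖c.1‖^2) := by ring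
      _ ≤ (1-α) * Dg θ1 θ2 γ1 γ2 σ τ c := h3
      _ ≤ _ := h1
  -- scalar sequences
  obtain ⟨an, han⟩ : ∃ f : ℕ → ℝ, ∀ n, f n
      = Bil θ1 θ2 γ1 γ2 σ L K M τ (ξ n - ξs) (ξ n - ξs) := ⟨_, fun _ => rfl⟩
  obtain ⟨cn, hcn⟩ : ∃ f : ℕ → ℝ, ∀ n, f n = ‖C (x n) - C xb‖ := ⟨_, fun _ => rfl⟩
  obtain ⟨ξx, hξx⟩ : ∃ f : ℕ → PS H G X Y, ∀ n, f n = ξ n + lam n • (ξe n - ξ n) :=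
    ⟨_, fun _ => rfl⟩
  have hcomp1 : ∀ n, (ξ n - ξe n).1 = x n - jx n := by
    intro n
    simp only [hξ, hξe, Prod.mk_sub_mk]
  -- descent at the exact point
  have hdes1 : ∀ n, Bil θ1 θ2 γ1 γ2 σ L K M τ (ξe n - ξs) (ξe n - ξs)
      ≤ an n - κ * cn n^2 := by
    intro n
    have hF1 := Q_F1 θ1 θ2 γ1 γ2 σ L K M τ (ξ n - ξs) (ξe n - ξs)
    rw [show (ξ n - ξs) - (ξe n - ξs) = ξ n - ξe n from by abel] at hF1
    have hstar := star n
    have ht := hQx (ξ n - ξe n)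
    rw [hcomp1 n] at ht
    have hinner : ⟪jx n - xb, C (x n) - C xb⟫
        = ⟪x n - xb, C (x n) - C xb⟫ - ⟪x n - jx n, C (x n) - C xb⟫ := by
      rw [← inner_sub_left, show (x n - xb) - (x n - jx n) = jx n - xb from by abel]
    have hco := hCco (x n) xb
    have hcs : ⟪x n - jx n, C (x n) - C xb⟫ ≤ ‖x n - jx n‖ * ‖C (x n) - C xb‖ :=
      real_inner_le_norm _ _
    have hbr := hbracket (‖x n - jx n‖) (‖C (x n) - C xb‖)
    rw [han n, hcn n]
    linarith [hF1, hstar, ht, hco, hcs, hbr, hinner]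
  -- descent after relaxation
  have hdes2 : ∀ n, Bil θ1 θ2 γ1 γ2 σ L K M τ (ξx n - ξs) (ξx n - ξs)
      ≤ an n - (ε*κ) * cn n^2 := by
    intro n
    have hF2 := Q_F2 θ1 θ2 γ1 γ2 σ L K M τ (ξ n - ξs) (ξe n - ξs) (lam n)
    rw [show (ξ n - ξs) + lam n • ((ξe n - ξs) - (ξ n - ξs)) = ξx n - ξs from by
      rw [hξx n]; module] at hF2
    rw [show (ξ n - ξs) - (ξe n - ξs) = ξ n - ξe n from by abel] at hF2
    have hd5 := hdes1 n
    have hl1 := (hlam n).1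
    have hl2 := (hlam n).2
    have hε0 := hε.1
    have hlam0 : 0 ≤ lam n := le_trans hε0.le hl1
    have h1 : lam n * Bil θ1 θ2 γ1 γ2 σ L K M τ (ξe n - ξs) (ξe n - ξs)
        ≤ lam n * (an n - κ * cn n^2) := mul_le_mul_of_nonneg_left hd5 hlam0
    have h2 : 0 ≤ lam n * (1 - lam n) * Bil θ1 θ2 γ1 γ2 σ L K M τ (ξ n - ξe n) (ξ n - ξe n) :=
      mul_nonneg (mul_nonneg hlam0 (by linarith)) (hQnn _)
    have h3 : ε * (κ * cn n^2) ≤ lam n * (κ * cn n^2) :=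
      mul_le_mul_of_nonneg_right hl1 (mul_nonneg hκ.le (sq_nonneg _))
    have e1 : lam n * (an n - κ * cn n^2) = lam n * an n - lam n * (κ * cn n^2) := by ring
    have e2 : (1 - lam n) * an n = an n - lam n * an n := by ring
    have e3 : (ε*κ) * cn n^2 = ε * (κ * cn n^2) := by ring
    rw [← han n] at hF2
    linarith [hF2, h1, h2, h3, e1, e2, e3]
  -- summability of the errors
  have su1 : ∀ i, Summable (fun n => ‖u1 n i - u1e n i‖) := by
    intro i
    have hdec : ∀ n, u1 n i - u1e n i
        = (u1 n i - (zz n i + γ1 i •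
            (ContinuousLinearMap.adjoint (K i) (p n i - (2:ℝ) • pt n i) + v n i +
              σ i • (L i ((2:ℝ) • xt n - x n) - r i))))
          + ((γ1 i) • (ContinuousLinearMap.adjoint (K i) ((2:ℝ) • (jp i n - pt n i)))
            + (γ1 i) • (σ i • (L i ((2:ℝ) • (xt n - jx n))))) := by
      intro n
      rw [hu1e n i]
      simp only [map_sub, map_smul, map_add]
      module
    have s1 : Summable (fun n => ‖(2:ℝ) • (jp i n - pt n i)‖) := by
      apply sum_norm_smul
      apply Summable.of_nonneg_of_le (fun _ => norm_nonneg _)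
        (fun n => le_of_eq (norm_sub_rev _ _)) (hjpsum i)
    have s2 : Summable (fun n => ‖(2:ℝ) • (xt n - jx n)‖) := by
      apply sum_norm_smul
      exact hjxsum
    have stot := sum_norm_add (hu1 i)
      (sum_norm_add (sum_norm_smul (γ1 i) (sum_norm_clm (ContinuousLinearMap.adjoint (K i)) s1))
        (sum_norm_smul (γ1 i) (sum_norm_smul (σ i) (sum_norm_clm (L i) s2))))
    exact stot.congr (fun n => (congrArg norm (hdec n)).symm)
  have su2 : ∀ i, Summable (fun n => ‖u2 n i - u2e n i‖) := by
    intro i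
    have hdec : ∀ n, u2 n i - u2e n i
        = (u2 n i - (y n i + γ2 i •
            (ContinuousLinearMap.adjoint (M i) (q n i - (2:ℝ) • qt n i) + v n i +
              σ i • (L i ((2:ℝ) • xt n - x n) - r i))))
          + ((γ2 i) • (ContinuousLinearMap.adjoint (M i) ((2:ℝ) • (jq i n - qt n i)))
            + (γ2 i) • (σ i • (L i ((2:ℝ) • (xt n - jx n))))) := by
      intro n
      rw [hu2e n i]
      simp only [map_sub, map_smul, map_add]
      module
    have s1 : Summable (fun n => ‖(2:ℝ) • (jq i n - qt n i)‖) := by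
      apply sum_norm_smul
      apply Summable.of_nonneg_of_le (fun _ => norm_nonneg _)
        (fun n => le_of_eq (norm_sub_rev _ _)) (hjqsum i)
    have s2 : Summable (fun n => ‖(2:ℝ) • (xt n - jx n)‖) := by
      apply sum_norm_smul
      exact hjxsum
    have stot := sum_norm_add (hu2 i)
      (sum_norm_add (sum_norm_smul (γ2 i) (sum_norm_clm (ContinuousLinearMap.adjoint (M i)) s1))
        (sum_norm_smul (γ2 i) (sum_norm_smul (σ i) (sum_norm_clm (L i) s2))))
    exact stot.congr (fun n => (congrArg norm (hdec n)).symm)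
  have szz : ∀ i, Summable (fun n => ‖zt n i - zze n i‖) := by
    intro i
    have hdec : ∀ n, zt n i - zze n i
        = (zt n i - ((1 + σ i * γ2 i) / (1 + σ i * (γ1 i + γ2 i))) •
            (u1 n i - (σ i * γ1 i / (1 + σ i * γ2 i)) • u2 n i))
          + ((1 + σ i * γ2 i) / (1 + σ i * (γ1 i + γ2 i))) •
            ((u1 n i - u1e n i) - (σ i * γ1 i / (1 + σ i * γ2 i)) • (u2 n i - u2e n i)) := by
      intro n
      rw [hzze n i]
      module
    have stot := sum_norm_add (hzt i)
      (sum_norm_smul ((1 + σ i * γ2 i) / (1 + σ i * (γ1 i + γ2 i)))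
        (sum_norm_sub (su1 i) (sum_norm_smul (σ i * γ1 i / (1 + σ i * γ2 i)) (su2 i))))
    exact stot.congr (fun n => (congrArg norm (hdec n)).symm)
  have syy : ∀ i, Summable (fun n => ‖yt n i - yye n i‖) := by
    intro i
    have hdec : ∀ n, yt n i - yye n i
        = (yt n i - (1 / (1 + σ i * γ2 i)) • (u2 n i - (σ i * γ2 i) • zt n i))
          + (1 / (1 + σ i * γ2 i)) •
            ((u2 n i - u2e n i) - (σ i * γ2 i) • (zt n i - zze n i)) := by
      intro n
      rw [hyye n i]
      module
    have stot := sum_norm_add (hyt i)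
      (sum_norm_smul (1 / (1 + σ i * γ2 i))
        (sum_norm_sub (su2 i) (sum_norm_smul (σ i * γ2 i) (szz i))))
    exact stot.congr (fun n => (congrArg norm (hdec n)).symm)
  have svv : ∀ i, Summable (fun n => ‖vt n i - vve n i‖) := by
    intro i
    have hdec : ∀ n, vt n i - vve n i
        = (vt n i - (v n i + σ i • (L i ((2:ℝ) • xt n - x n) - r i - zt n i - yt n i)))
          + σ i • ((L i ((2:ℝ) • (xt n - jx n)) - (zt n i - zze n i)) - (yt n i - yye n i)) := by
      intro n
      rw [hvve n i]
      simp only [map_sub, map_smul, map_add]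
      module
    have s2 : Summable (fun n => ‖L i ((2:ℝ) • (xt n - jx n))‖) :=
      sum_norm_clm (L i) (sum_norm_smul 2 hjxsum)
    have stot := sum_norm_add (hvt i)
      (sum_norm_smul (σ i) (sum_norm_sub (sum_norm_sub s2 (szz i)) (syy i)))
    exact stot.congr (fun n => (congrArg norm (hdec n)).symm)
  -- summability of the combined error norm
  have hNCeq : ∀ n, NC (ξt n - ξe n) = ‖xt n - jx n‖
      + ∑ i, (‖pt n i - jp i n‖ + ‖qt n i - jq i n‖ + ‖zt n i - zze n i‖
        + ‖yt n i - yye n i‖ + ‖vt n i - vve n i‖) := by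
    intro n
    simp only [hξt, hξe, Prod.mk_sub_mk, NC, Pi.sub_apply]
  have sNC : Summable (fun n => NC (ξt n - ξe n)) := by
    have stot : Summable (fun n => ‖xt n - jx n‖
        + ∑ i, (‖pt n i - jp i n‖ + ‖qt n i - jq i n‖ + ‖zt n i - zze n i‖
          + ‖yt n i - yye n i‖ + ‖vt n i - vve n i‖)) := by
      apply Summable.add hjxsum
      apply summable_sum
      intro i _
      exact (((((hjpsum i).add (hjqsum i)).add (szz i)).add (syy i)).add (svv i))
    exact stot.congr (fun n => (hNCeq n).symm)
  -- update identity in the product space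
  have hstepeq : ∀ n, ξ (n+1) = ξx n + lam n • (ξt n - ξe n) := by
    intro n
    rw [hξx n]
    simp only [hξ, hξe, hξt]
    simp only [Prod.mk_sub_mk, Prod.smul_mk, Prod.mk_add_mk, Prod.mk.injEq]
    refine ⟨?_, ?_, ?_, ?_, ?_, ?_⟩
    · rw [hx n]; module
    · funext i
      simp only [Pi.add_apply, Pi.sub_apply, Pi.smul_apply]
      rw [hp n i]; module
    · funext i
      simp only [Pi.add_apply, Pi.sub_apply, Pi.smul_apply]
      rw [hq n i]; module
    · funext i
      simp only [Pi.add_apply, Pi.sub_apply, Pi.smul_apply]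
      rw [hz n i]; module
    · funext i
      simp only [Pi.add_apply, Pi.sub_apply, Pi.smul_apply]
      rw [hy n i]; module
    · funext i
      simp only [Pi.add_apply, Pi.sub_apply, Pi.smul_apply]
      rw [hv n i]; module
  obtain ⟨ηn, hηn⟩ : ∃ f : ℕ → ℝ, ∀ n, f n
      = Real.sqrt (CB θ1 θ2 γ1 γ2 σ L K M τ) * NC (ξt n - ξe n) := ⟨_, fun _ => rfl⟩
  have hCB0 := CB_nonneg θ1 θ2 γ1 γ2 σ L K M τ hθ1 hθ2 hγ1 hγ2 hσ hτ
  have hηnn : ∀ n, 0 ≤ ηn n := by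
    intro n; rw [hηn n]; exact mul_nonneg (Real.sqrt_nonneg _) (NC_nonneg _)
  have hηsum : Summable ηn := by
    have h1 := sNC.mul_left (Real.sqrt (CB θ1 θ2 γ1 γ2 σ L K M τ))
    exact h1.congr (fun n => (hηn n).symm)
  have hQerr : ∀ n, Real.sqrt (Bil θ1 θ2 γ1 γ2 σ L K M τ (lam n • (ξt n - ξe n))
      (lam n • (ξt n - ξe n))) ≤ ηn n := by
    intro n
    rw [Q_smul θ1 θ2 γ1 γ2 σ L K M τ (lam n) (ξt n - ξe n)]
    have h1 : (lam n)^2 * Bil θ1 θ2 γ1 γ2 σ L K M τ (ξt n - ξe n) (ξt n - ξe n)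
        ≤ Bil θ1 θ2 γ1 γ2 σ L K M τ (ξt n - ξe n) (ξt n - ξe n) := by
      have h2 := hQnn (ξt n - ξe n)
      have hl0 : 0 ≤ lam n := le_trans hε.1.le (hlam n).1
      have hl1 : lam n^2 ≤ 1 := by nlinarith [(hlam n).2, hl0]
      nlinarith [h2, hl1]
    have h3 := Q_up θ1 θ2 γ1 γ2 σ L K M τ hθ1 hθ2 hγ1 hγ2 hσ hτ (ξt n - ξe n)
    calc Real.sqrt ((lam n)^2 * Bil θ1 θ2 γ1 γ2 σ L K M τ (ξt n - ξe n) (ξt n - ξe n))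
        ≤ Real.sqrt (CB θ1 θ2 γ1 γ2 σ L K M τ * (NC (ξt n - ξe n))^2) :=
          Real.sqrt_le_sqrt (le_trans h1 h3)
      _ = Real.sqrt (CB θ1 θ2 γ1 γ2 σ L K M τ) * NC (ξt n - ξe n) := by
          rw [Real.sqrt_mul hCB0, Real.sqrt_sq (NC_nonneg _)]
      _ = ηn n := (hηn n).symm
  have hann : ∀ n, 0 ≤ an n := fun n => (han n) ▸ hQnn _
  have hd7 : ∀ n, 0 ≤ an n - (ε*κ) * cn n^2 := by
    intro n; have := hQnn (ξx n - ξs); linarith [hdes2 n]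
  have step1 : ∀ n, Real.sqrt (an (n+1)) ≤ Real.sqrt (an n - (ε*κ) * cn n^2) + ηn n := by
    intro n
    have e : ξ (n+1) - ξs = (ξx n - ξs) + lam n • (ξt n - ξe n) := by
      rw [hstepeq n]; abel
    have htr := sqrtQ_triangle θ1 θ2 γ1 γ2 σ L K M τ hQnn (ξx n - ξs)
      (lam n • (ξt n - ξe n))
    rw [← e] at htr
    have h1 : Real.sqrt (Bil θ1 θ2 γ1 γ2 σ L K M τ (ξx n - ξs) (ξx n - ξs))
        ≤ Real.sqrt (an n - (ε*κ)*cn n^2) := Real.sqrt_le_sqrt (hdes2 n)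
    have h2 := hQerr n
    rw [han (n+1)]
    linarith [htr, h1, h2]
  have hek0 : 0 < ε*κ := mul_pos hε.1 hκ
  have step2 : ∀ n, Real.sqrt (an (n+1)) ≤ Real.sqrt (an n) + ηn n := by
    intro n
    have h1 : Real.sqrt (an n - (ε*κ)*cn n^2) ≤ Real.sqrt (an n) := by
      apply Real.sqrt_le_sqrt
      nlinarith [sq_nonneg (cn n), hek0.le]
    linarith [step1 n, h1]
  obtain ⟨T, hT⟩ : ∃ t : ℝ, t = ∑' n, ηn n := ⟨_, rfl⟩
  have hT0 : 0 ≤ T := hT ▸ tsum_nonneg hηnn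
  obtain ⟨R, hR⟩ : ∃ t : ℝ, t = Real.sqrt (an 0) + T := ⟨_, rfl⟩
  have hR0 : 0 ≤ R := by rw [hR]; have := Real.sqrt_nonneg (an 0); linarith
  have hbR : ∀ n, Real.sqrt (an n) ≤ R := by
    have key : ∀ n, Real.sqrt (an n) ≤ Real.sqrt (an 0) + ∑ k ∈ Finset.range n, ηn k := by
      intro n
      induction n with
      | zero => simp
      | succ k ih =>
        rw [Finset.sum_range_succ]
        have := step2 k
        linarith
    intro n
    have h2 : ∑ k ∈ Finset.range n, ηn k ≤ T := by
      rw [hT]; exact Summable.sum_le_tsum _ (fun k _ => hηnn k) hηsum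
    rw [hR]
    linarith [key n]
  have step3 : ∀ n, an (n+1) ≤ an n - (ε*κ) * cn n^2 + ηn n * (2*R + ηn n) := by
    intro n
    have h1 := step1 n
    have hs0 : 0 ≤ Real.sqrt (an n - (ε*κ)*cn n^2) := Real.sqrt_nonneg _
    have h2 : an (n+1) ≤ (Real.sqrt (an n - (ε*κ)*cn n^2) + ηn n)^2 := by
      have h3 : (Real.sqrt (an (n+1)))^2 ≤ (Real.sqrt (an n - (ε*κ)*cn n^2) + ηn n)^2 :=
        pow_le_pow_left₀ (Real.sqrt_nonneg _) h1 2
      rwa [Real.sq_sqrt (hann (n+1))] at h3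
    have h4 : (Real.sqrt (an n - (ε*κ)*cn n^2))^2 = an n - (ε*κ)*cn n^2 :=
      Real.sq_sqrt (hd7 n)
    have h5 : Real.sqrt (an n - (ε*κ)*cn n^2) ≤ R := by
      have h6 : Real.sqrt (an n - (ε*κ)*cn n^2) ≤ Real.sqrt (an n) := by
        apply Real.sqrt_le_sqrt
        nlinarith [sq_nonneg (cn n), hek0.le]
      linarith [hbR n]
    nlinarith [h2, h4, h5, hηnn n]
  have hpartial : ∀ N, (ε*κ) * ∑ n ∈ Finset.range N, cn n^2 + an N
      ≤ an 0 + (2*R + T) * ∑ n ∈ Finset.range N, ηn n := by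
    intro N
    induction N with
    | zero => simp
    | succ k ih =>
      rw [Finset.sum_range_succ, Finset.sum_range_succ]
      have h1 := step3 k
      have h2 : ηn k ≤ T := by
        rw [hT]; exact Summable.le_tsum hηsum k (fun j _ => hηnn j)
      have h3 : ηn k * (2*R + ηn k) ≤ (2*R + T) * ηn k := by nlinarith [hηnn k]
      nlinarith [ih, h1, h3]
  have scsum : Summable (fun n => cn n^2) := by
    apply summable_of_sum_range_le (fun n => sq_nonneg _) (c := (an 0 + (2*R+T)*T)/(ε*κ))
    intro N
    have h1 := hpartial N
    have h2 : ∑ n ∈ Finset.range N, ηn n ≤ T := by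
      rw [hT]; exact Summable.sum_le_tsum _ (fun k _ => hηnn k) hηsum
    have h3 : (2*R + T) * ∑ n ∈ Finset.range N, ηn n ≤ (2*R+T)*T :=
      mul_le_mul_of_nonneg_left h2 (by linarith)
    have h4 : (ε*κ) * ∑ n ∈ Finset.range N, cn n^2 ≤ an 0 + (2*R+T)*T := by
      linarith [hann N]
    rw [le_div_iff₀ hek0]
    linarith
  have ctend : Tendsto cn atTop (𝓝 0) := by
    have h1 := scsum.tendsto_atTop_zero
    have h2 : Tendsto (fun n => Real.sqrt (cn n^2)) atTop (𝓝 0) := by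
      have h3 := (Real.continuous_sqrt.tendsto 0).comp h1
      simpa [Function.comp_def] using h3
    refine h2.congr (fun n => ?_)
    rw [Real.sqrt_sq (by rw [hcn n]; exact norm_nonneg _)]
  -- boundedness of x
  have hcomp2 : ∀ n, (ξ n - ξs).1 = x n - xb := by
    intro n
    simp only [hξ, hξs, Prod.mk_sub_mk]
  have xbound : ∀ n, ‖x n - xb‖ ≤ Real.sqrt (R^2 / ((1-α)*τ⁻¹)) := by
    intro n
    have h1 := hQx (ξ n - ξs)
    rw [hcomp2 n, ← han n] at h1
    have h2 : an n ≤ R^2 := by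
      have h3 : (Real.sqrt (an n))^2 ≤ R^2 := pow_le_pow_left₀ (Real.sqrt_nonneg _) (hbR n) 2
      rwa [Real.sq_sqrt (hann n)] at h3
    have h4 : ‖x n - xb‖^2 ≤ R^2 / ((1-α)*τ⁻¹) := by
      rw [le_div_iff₀ hβ0]
      nlinarith [h1, h2]
    calc ‖x n - xb‖ = Real.sqrt (‖x n - xb‖^2) := (Real.sqrt_sq (norm_nonneg _)).symm
      _ ≤ Real.sqrt (R^2 / ((1-α)*τ⁻¹)) := Real.sqrt_le_sqrt h4
  -- the inner product tends to zero
  have itend : Tendsto (fun n => ⟪x n - xb, C (x n) - C xb⟫) atTop (𝓝 0) := by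
    have hup : ∀ n, ⟪x n - xb, C (x n) - C xb⟫ ≤ Real.sqrt (R^2/((1-α)*τ⁻¹)) * cn n := by
      intro n
      have h1 : ⟪x n - xb, C (x n) - C xb⟫ ≤ ‖x n - xb‖ * ‖C (x n) - C xb‖ :=
        real_inner_le_norm _ _
      have h2 : ‖x n - xb‖ * ‖C (x n) - C xb‖
          ≤ Real.sqrt (R^2/((1-α)*τ⁻¹)) * ‖C (x n) - C xb‖ :=
        mul_le_mul_of_nonneg_right (xbound n) (norm_nonneg _)
      rw [hcn n]
      linarith
    have hlo : ∀ n, (0:ℝ) ≤ ⟪x n - xb, C (x n) - C xb⟫ := fun n => hCmono (x n) xb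
    have hupt : Tendsto (fun n => Real.sqrt (R^2/((1-α)*τ⁻¹)) * cn n) atTop (𝓝 0) := by
      have h1 := ctend.const_mul (Real.sqrt (R^2/((1-α)*τ⁻¹)))
      simpa using h1
    exact tendsto_of_tendsto_of_tendsto_of_le_of_le tendsto_const_nhds hupt hlo hup
  -- endgame via uniform monotonicity
  obtain ⟨φ, hφmono, hφ0, hφle⟩ := hunif
  have phitend : Tendsto (fun n => φ ‖x n - xb‖) atTop (𝓝 0) := by
    have h2 : Tendsto (fun n => ENNReal.ofReal ⟪x n - xb, C (x n) - C xb⟫) atTop (𝓝 0) := by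
      have h3 := ENNReal.tendsto_ofReal itend
      rwa [ENNReal.ofReal_zero] at h3
    exact tendsto_of_tendsto_of_tendsto_of_le_of_le tendsto_const_nhds h2
      (fun n => zero_le) (fun n => hφle (x n))
  rw [tendsto_iff_norm_sub_tendsto_zero]
  by_contra hcon
  rw [Metric.tendsto_atTop] at hcon
  push_neg at hcon
  obtain ⟨δ, hδ0, hfreq⟩ := hcon
  have hφpos : 0 < φ δ := by
    rw [pos_iff_ne_zero]
    intro hzero
    have := (hφ0 δ hδ0.le).mp hzero
    linarith
  have hev := phitend.eventually_lt_const hφpos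
  rw [eventually_atTop] at hev
  obtain ⟨N, hN⟩ := hev
  obtain ⟨n, hn, hdist⟩ := hfreq N
  have hδn : δ ≤ ‖x n - xb‖ := by
    have : dist ‖x n - xb‖ 0 = ‖x n - xb‖ := by
      rw [Real.dist_eq, sub_zero, abs_of_nonneg (norm_nonneg _)]
    linarith [hdist, this ▸ hdist]
  have hmono := hφmono (Set.mem_Ici.mpr hδ0.le) (Set.mem_Ici.mpr (norm_nonneg (x n - xb))) hδn
  exact absurd (lt_of_le_of_lt hmono (hN n hn)) (lt_irrefl _)
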